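/- Let d ≥ 1. There exists α₀ > d, depending only on d, such that for every α ≥ α₀ the infimum over all pairs (φ,ψ) ∈ B_α of the Lebesgue measure of ⋃_{x∈φ} B_{D(x,ψ)}(x) equals κ_d, the volume of the unit ball in ℝ^d; moreover, this value is attained by the pair φ = {0}, ψ = {0, (1,0,…,0)}. -/

import Mathlib

open Metric Set MeasureTheory ENNReal
open scoped Classical
open scoped RealInnerProductSpace

noncomputable def nnDist (d : ℕ) (ψ : Finset (EuclideanSpace ℝ (Fin d)))
    (x : EuclideanSpace ℝ (Fin d)) : ℝ :=
  Metric.infDist x ((↑ψ : Set (EuclideanSpace ℝ (Fin d))) \ {x})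

def Generic (d : ℕ) (ψ : Finset (EuclideanSpace ℝ (Fin d))) : Prop :=
  ∀ w ∈ ψ, ∀ x ∈ ψ, ∀ y ∈ ψ, ∀ z ∈ ψ,
    dist w x = dist y z → 0 < dist w x → ({w, x} : Set (EuclideanSpace ℝ (Fin d))) = {y, z}

noncomputable def memB (d : ℕ) (α : ℝ) (φ ψ : Finset (EuclideanSpace ℝ (Fin d))) : Prop :=
  φ ⊆ ψ ∧ 2 ≤ ψ.card ∧ Generic d ψ ∧ 1 ≤ ∑ x ∈ φ, nnDist d ψ x ^ α

lemma half_vol {d : ℕ} (c v : EuclideanSpace ℝ (Fin d)) (r : ℝ) :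
    volume (ball c r) ≤
      2 * volume (ball c r ∩ {z | ⟪z - c, v⟫ ≤ 0}) := by
  set Hm := ball c r ∩ {z : EuclideanSpace ℝ (Fin d) | ⟪z - c, v⟫ ≤ 0} with hHm
  set Hp := ball c r ∩ {z : EuclideanSpace ℝ (Fin d) | 0 ≤ ⟪z - c, v⟫} with hHp
  have hsub : ball c r ⊆ Hm ∪ Hp := fun z hz =>
    (le_total (⟪z - c, v⟫) 0).imp (fun h => ⟨hz, h⟩) (fun h => ⟨hz, h⟩)
  have himg : Hp ⊆ AffineMap.homothety c (-1:ℝ) '' Hm := by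
    intro z hz
    have h2 : (0:ℝ) ≤ ⟪z - c, v⟫ := hz.2
    have key : ((-1:ℝ) • (z - c) + c) - c = -(z - c) := by module
    refine ⟨(-1:ℝ) • (z - c) + c, ⟨?_, ?_⟩, ?_⟩
    · rw [mem_ball, dist_eq_norm, key, norm_neg, ← dist_eq_norm]
      exact hz.1
    · show ⟪((-1:ℝ) • (z - c) + c) - c, v⟫ ≤ 0
      rw [key, inner_neg_left]
      linarith
    · rw [AffineMap.homothety_apply]
      simp only [vsub_eq_sub, vadd_eq_add]
      module
  calc volume (ball c r) ≤ volume (Hm ∪ Hp) := measure_mono hsub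
    _ ≤ volume Hm + volume Hp := measure_union_le _ _
    _ ≤ volume Hm + volume (AffineMap.homothety c (-1:ℝ) '' Hm) :=
        add_le_add_right (measure_mono himg) _
    _ = volume Hm + volume Hm := by rw [Measure.addHaar_image_homothety]; simp
    _ = 2 * volume Hm := (two_mul _).symm

lemma realineq (d : ℕ) (α M S : ℝ)
    (hα : (d:ℝ) * 2^(d+1) ≤ α) (hM0 : 0 < M) (hM1 : M ≤ 1)
    (hS : 1 ≤ M ^ α + M ^ (α - (d:ℝ)) * S) :
    1 ≤ M ^ (d:ℝ) + ((2:ℝ)^(d+1))⁻¹ * S := by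
  set ε : ℝ := ((2:ℝ)^(d+1))⁻¹ with hε
  have h2pos : (0:ℝ) < 2^(d+1) := by positivity
  have hε0 : (0:ℝ) < ε := by positivity
  have hε1 : ε ≤ 1 := by
    rw [hε, inv_le_one_iff₀]; right; exact one_le_pow₀ one_le_two
  have hεd : (d:ℝ) ≤ ε * α := by
    have he : ε * ((d:ℝ) * 2^(d+1)) = d := by rw [hε, mul_comm, mul_assoc, mul_inv_cancel₀ h2pos.ne', mul_one]
    calc (d:ℝ) = ε * ((d:ℝ)*2^(d+1)) := he.symm
      _ ≤ ε * α := mul_le_mul_of_nonneg_left hα hε0.le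
  have hS' : (1 - M^α) ≤ M^(α-(d:ℝ)) * S := by linarith
  have hpow : M ^ ((d:ℝ)-α) * (M ^ (α-(d:ℝ)) * S) = S := by
    rw [← mul_assoc, ← Real.rpow_add hM0]; norm_num
  have hSge : M ^ ((d:ℝ)-α) - M ^ (d:ℝ) ≤ S := by
    have h := mul_le_mul_of_nonneg_left hS' (Real.rpow_pos_of_pos hM0 ((d:ℝ)-α)).le
    rw [hpow] at h
    have e : M ^ ((d:ℝ)-α) * (1 - M^α) = M ^ ((d:ℝ)-α) - M ^ (d:ℝ) := by
      rw [mul_sub, mul_one, ← Real.rpow_add hM0]; ring_nf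
    linarith [e ▸ h]
  have amgm := Real.geom_mean_le_arith_mean2_weighted (by linarith : (0:ℝ) ≤ 1 - ε) hε0.le
    (Real.rpow_nonneg hM0.le (d:ℝ)) (Real.rpow_nonneg hM0.le ((d:ℝ)-α)) (by ring)
  have hgm : (M ^ (d:ℝ)) ^ (1-ε) * (M ^ ((d:ℝ)-α)) ^ ε = M ^ ((d:ℝ)*(1-ε) + ((d:ℝ)-α)*ε) := by
    rw [Real.rpow_add hM0, ← Real.rpow_mul hM0.le, ← Real.rpow_mul hM0.le]
  have hone : (1:ℝ) ≤ M ^ ((d:ℝ)*(1-ε) + ((d:ℝ)-α)*ε) :=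
    Real.one_le_rpow_of_pos_of_le_one_of_nonpos hM0 hM1 (by nlinarith)
  rw [hgm] at amgm
  have hmul := mul_le_mul_of_nonneg_left hSge hε0.le
  linarith

lemma nnDist_pos (d : ℕ) (ψ : Finset (EuclideanSpace ℝ (Fin d))) (h2 : 2 ≤ ψ.card)
    {x : EuclideanSpace ℝ (Fin d)} (hx : x ∈ ψ) : 0 < nnDist d ψ x := by
  obtain ⟨y, hy, hyx⟩ := Finset.exists_mem_ne (show 1 < ψ.card by omega) x
  have hne : ((↑ψ : Set (EuclideanSpace ℝ (Fin d))) \ {x}).Nonempty := ⟨y, hy, hyx⟩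
  have hcl : IsClosed ((↑ψ : Set (EuclideanSpace ℝ (Fin d))) \ {x}) :=
    (ψ.finite_toSet.subset diff_subset).isClosed
  exact (hcl.notMem_iff_infDist_pos hne).mp (fun h => h.2 rfl)

lemma nnDist_le (d : ℕ) (ψ : Finset (EuclideanSpace ℝ (Fin d)))
    {x y : EuclideanSpace ℝ (Fin d)} (hy : y ∈ ψ) (hxy : y ≠ x) :
    nnDist d ψ x ≤ dist x y :=
  Metric.infDist_le_dist_of_mem ⟨hy, hxy⟩

lemma lower_bound (d : ℕ) (hd : 0 < d) (α : ℝ) (hα : (d:ℝ) * 2^(d+1) ≤ α)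
    (φ ψ : Finset (EuclideanSpace ℝ (Fin d))) (h : memB d α φ ψ) :
    volume (closedBall (0 : EuclideanSpace ℝ (Fin d)) 1) ≤
      volume (⋃ x ∈ φ, closedBall x (nnDist d ψ x)) := by
  obtain ⟨hsub, hcard, hgen, hsum⟩ := h
  set D := nnDist d ψ with hDdef
  haveI : Nontrivial (EuclideanSpace ℝ (Fin d)) := by
    refine Module.nontrivial_of_finrank_pos (R := ℝ) (M := EuclideanSpace ℝ (Fin d)) ?_
    rw [finrank_euclideanSpace_fin]; omega
  have hfr : Module.finrank ℝ (EuclideanSpace ℝ (Fin d)) = d := finrank_euclideanSpace_fin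
  have hDpos : ∀ x ∈ φ, 0 < D x := fun x hx => nnDist_pos d ψ hcard (hsub hx)
  have hDdist : ∀ x ∈ φ, ∀ y ∈ φ, x ≠ y → D x ≤ dist x y := fun x hx y hy hxy =>
    nnDist_le d ψ (hsub hy) hxy.symm
  have hφne : φ.Nonempty := by
    rw [Finset.nonempty_iff_ne_empty]
    rintro rfl
    simp at hsum
    linarith
  by_cases hbig : ∃ x ∈ φ, 1 ≤ D x
  · obtain ⟨x, hx, h1⟩ := hbig
    calc volume (closedBall (0 : EuclideanSpace ℝ (Fin d)) 1)
        = volume (closedBall x 1) := (Measure.addHaar_closedBall_center volume x 1).symm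
      _ ≤ volume (closedBall x (D x)) := measure_mono (closedBall_subset_closedBall h1)
      _ ≤ volume (⋃ x ∈ φ, closedBall x (D x)) := by
          apply measure_mono
          exact Set.subset_biUnion_of_mem (u := fun x => closedBall x (D x)) hx
  · push_neg at hbig
    obtain ⟨c, hc, hmax⟩ := Finset.exists_max_image φ D hφne
    set M := D c with hMdef
    have hM0 : 0 < M := hDpos c hc
    have hM1 : M ≤ 1 := (hbig c hc).le
    set H : EuclideanSpace ℝ (Fin d) → Set (EuclideanSpace ℝ (Fin d)) := fun x =>
      ball x (D x / 2) ∩ {z | ⟪z - x, c - x⟫ ≤ 0} with hHdef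
    set ι := volume (ball (0 : EuclideanSpace ℝ (Fin d)) 1) with hι
    have hHmeas : ∀ x : EuclideanSpace ℝ (Fin d), MeasurableSet (H x) := by
      intro x
      refine measurableSet_ball.inter ?_
      have : IsClosed {z : EuclideanSpace ℝ (Fin d) | ⟪z - x, c - x⟫ ≤ 0} :=
        isClosed_le (Continuous.inner (continuous_id.sub continuous_const) continuous_const)
          continuous_const
      exact this.measurableSet
    have hHsub : ∀ x ∈ φ, H x ⊆ closedBall x (D x) := by
      intro x hx
      refine (Set.inter_subset_left).trans (ball_subset_closedBall.trans
        (closedBall_subset_closedBall ?_))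
      linarith [hDpos x hx]
    have hfar : ∀ x ∈ φ, x ≠ c → ∀ z ∈ H x, M ≤ dist z c := by
      intro x hx hxc z hz
      have h2 : ⟪z - x, c - x⟫ ≤ 0 := hz.2
      have hsq : ‖c - x‖^2 ≤ ‖z - c‖^2 := by
        have e : ‖(z - x) - (c - x)‖^2 = ‖z - x‖^2 - 2*⟪z - x, c - x⟫ + ‖c - x‖^2 :=
          norm_sub_sq_real (z - x) (c - x)
        have e2 : (z - x) - (c - x) = z - c := by abel
        rw [e2] at e
        nlinarith [sq_nonneg ‖z - x‖]
      have hn : ‖c - x‖ ≤ ‖z - c‖ := by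
        have := Real.sqrt_le_sqrt hsq
        rwa [Real.sqrt_sq (norm_nonneg _), Real.sqrt_sq (norm_nonneg _)] at this
      have hMle : M ≤ dist c x := hDdist c hc x hx (Ne.symm hxc)
      calc M ≤ dist c x := hMle
        _ = ‖c - x‖ := dist_eq_norm c x
        _ ≤ ‖z - c‖ := hn
        _ = dist z c := (dist_eq_norm z c).symm
    -- disjointness of the H's among themselves
    have hHdisj : (↑(φ.erase c) : Set (EuclideanSpace ℝ (Fin d))).PairwiseDisjoint H := by
      intro x hx y hy hxy
      have hxφ : x ∈ φ := Finset.mem_of_mem_erase hx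
      have hyφ : y ∈ φ := Finset.mem_of_mem_erase hy
      simp only [Function.onFun]
      rw [Set.disjoint_left]
      intro z hzx hzy
      have h1 : dist z x < D x / 2 := mem_ball.mp hzx.1
      have h2 : dist z y < D y / 2 := mem_ball.mp hzy.1
      have h3 : D x ≤ dist x y := hDdist x hxφ y hyφ hxy
      have h4 : D y ≤ dist x y := by
        rw [dist_comm]; exact hDdist y hyφ x hxφ hxy.symm
      have h5 : dist x y ≤ dist z x + dist z y := dist_triangle_left x y z
      linarith
    -- disjointness of ball c M from the H's
    have hdisj1 : Disjoint (ball c M) (⋃ x ∈ φ.erase c, H x) := by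
      rw [Set.disjoint_left]
      intro z hz hz2
      simp only [Set.mem_iUnion] at hz2
      obtain ⟨x, hx, hzx⟩ := hz2
      have := hfar x (Finset.mem_of_mem_erase hx) (Finset.ne_of_mem_erase hx) z hzx
      rw [mem_ball] at hz
      linarith
    -- measure computation for the union
    have hcup : volume (ball c M ∪ ⋃ x ∈ φ.erase c, H x)
        = volume (ball c M) + ∑ x ∈ φ.erase c, volume (H x) := by
      rw [measure_union hdisj1 (Finset.measurableSet_biUnion _ fun x _ => hHmeas x),
        measure_biUnion_finset hHdisj fun x _ => hHmeas x]
    -- the union is inside the union of closed balls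
    have hcupsub : ball c M ∪ ⋃ x ∈ φ.erase c, H x ⊆ ⋃ x ∈ φ, closedBall x (D x) := by
      refine Set.union_subset ?_ ?_
      · exact ball_subset_closedBall.trans
          (Set.subset_biUnion_of_mem (u := fun x => closedBall x (D x)) hc)
      · refine Set.iUnion₂_subset fun x hx => (hHsub x (Finset.mem_of_mem_erase hx)).trans
          (Set.subset_biUnion_of_mem (u := fun x => closedBall x (D x))
            (Finset.mem_of_mem_erase hx))
    -- volume of ball c M
    have hvolc : volume (ball c M) = ENNReal.ofReal (M ^ d) * ι := by
      rw [Measure.addHaar_ball volume c hM0.le, hfr]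
    -- volume of the half balls
    have hvolx : ∀ x ∈ φ.erase c,
        ENNReal.ofReal ((D x / 2) ^ d / 2) * ι ≤ volume (H x) := by
      intro x hx
      have hxφ : x ∈ φ := Finset.mem_of_mem_erase hx
      have hb := half_vol x (c - x) (D x / 2)
      rw [Measure.addHaar_ball volume x (by linarith [hDpos x hxφ] : (0:ℝ) ≤ D x / 2), hfr] at hb
      rw [← ENNReal.mul_le_mul_iff_right (a := (2:ℝ≥0∞)) (by norm_num) (by norm_num)]
      have h2 : (2:ℝ≥0∞) * ENNReal.ofReal ((D x / 2) ^ d / 2)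
          = ENNReal.ofReal ((D x / 2) ^ d) := by
        rw [show ((2:ℝ≥0∞)) = ENNReal.ofReal (2:ℝ) by simp,
          ← ENNReal.ofReal_mul (by norm_num : (0:ℝ) ≤ 2)]
        congr 1
        ring
      rw [← mul_assoc, h2]
      exact hb
    -- nonnegativity of the weights
    have hw : ∀ x ∈ φ.erase c, (0:ℝ) ≤ (D x / 2) ^ d / 2 := by
      intro x hx
      have := hDpos x (Finset.mem_of_mem_erase hx)
      positivity
    -- summing up
    have hsum2 : ENNReal.ofReal (M ^ d + ∑ x ∈ φ.erase c, (D x / 2) ^ d / 2) * ι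
        ≤ volume (ball c M) + ∑ x ∈ φ.erase c, volume (H x) := by
      rw [ENNReal.ofReal_add (pow_nonneg hM0.le d) (Finset.sum_nonneg hw), add_mul, hvolc]
      refine add_le_add_right ?_ _
      rw [ENNReal.ofReal_sum_of_nonneg hw, Finset.sum_mul]
      exact Finset.sum_le_sum hvolx
    -- the real inequality
    have hreal : (1:ℝ) ≤ M ^ d + ∑ x ∈ φ.erase c, (D x / 2) ^ d / 2 := by
      have hαd : (d:ℝ) ≤ α := by
        have : (d:ℝ) * 1 ≤ (d:ℝ) * 2^(d+1) :=
          mul_le_mul_of_nonneg_left (one_le_pow₀ one_le_two) (Nat.cast_nonneg d)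
        linarith
      have hterm : ∀ x ∈ φ.erase c, D x ^ α ≤ M ^ (α - (d:ℝ)) * D x ^ d := by
        intro x hx
        have hxφ : x ∈ φ := Finset.mem_of_mem_erase hx
        have hdx : 0 < D x := hDpos x hxφ
        have e : D x ^ α = D x ^ (α - (d:ℝ)) * D x ^ (d:ℝ) := by
          rw [← Real.rpow_add hdx]; ring_nf
        rw [e, Real.rpow_natCast]
        exact mul_le_mul_of_nonneg_right
          (Real.rpow_le_rpow hdx.le (hmax x hxφ) (by linarith)) (pow_nonneg hdx.le d)
      have hkey : (1:ℝ) ≤ M ^ α + M ^ (α - (d:ℝ)) * ∑ x ∈ φ.erase c, D x ^ d := by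
        calc (1:ℝ) ≤ ∑ x ∈ φ, D x ^ α := hsum
          _ = M ^ α + ∑ x ∈ φ.erase c, D x ^ α := (Finset.add_sum_erase φ _ hc).symm
          _ ≤ M ^ α + M ^ (α - (d:ℝ)) * ∑ x ∈ φ.erase c, D x ^ d := by
              rw [Finset.mul_sum]
              exact add_le_add_right (Finset.sum_le_sum hterm) _
      have hri := realineq d α M (∑ x ∈ φ.erase c, D x ^ d) hα hM0 hM1 hkey
      rw [Real.rpow_natCast] at hri
      refine hri.trans (le_of_eq ?_)
      congr 1
      rw [Finset.mul_sum]
      apply Finset.sum_congr rfl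
      intro x hx
      rw [div_pow, div_div, ← pow_succ, div_eq_inv_mul]
    -- conclude
    calc volume (closedBall (0 : EuclideanSpace ℝ (Fin d)) 1)
        = ι := Measure.addHaar_closedBall_eq_addHaar_ball volume 0 1
      _ = 1 * ι := (one_mul ι).symm
      _ ≤ ENNReal.ofReal (M ^ d + ∑ x ∈ φ.erase c, (D x / 2) ^ d / 2) * ι :=
          mul_le_mul_left (ENNReal.one_le_ofReal.mpr hreal) ι
      _ ≤ volume (ball c M) + ∑ x ∈ φ.erase c, volume (H x) := hsum2
      _ = volume (ball c M ∪ ⋃ x ∈ φ.erase c, H x) := hcup.symm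
      _ ≤ volume (⋃ x ∈ φ, closedBall x (D x)) := measure_mono hcupsub

lemma ex_ne (d : ℕ) (hd : 0 < d) :
    EuclideanSpace.single (⟨0, hd⟩ : Fin d) (1 : ℝ) ≠ 0 := by
  intro h
  have := EuclideanSpace.norm_single (𝕜 := ℝ) (⟨0, hd⟩ : Fin d) (1:ℝ)
  rw [h] at this
  simp at this

lemma ex_nnDist (d : ℕ) (hd : 0 < d) :
    nnDist d {0, EuclideanSpace.single (⟨0, hd⟩ : Fin d) (1 : ℝ)} 0 = 1 := by
  set e := EuclideanSpace.single (⟨0, hd⟩ : Fin d) (1 : ℝ) with he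
  have he0 : e ≠ 0 := ex_ne d hd
  have hset : (↑({0, e} : Finset (EuclideanSpace ℝ (Fin d))) :
      Set (EuclideanSpace ℝ (Fin d))) \ {0} = {e} := by
    ext z
    simp only [Finset.coe_insert, Finset.coe_singleton, Set.mem_diff, Set.mem_insert_iff,
      Set.mem_singleton_iff]
    constructor
    · rintro ⟨h1 | h2, h3⟩
      · exact absurd h1 h3
      · exact h2
    · rintro rfl
      exact ⟨Or.inr rfl, he0⟩
  rw [nnDist, hset, Metric.infDist_singleton, dist_zero_left, he,
    EuclideanSpace.norm_single, norm_one]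

lemma ex_memB (d : ℕ) (hd : 0 < d) (α : ℝ) :
    memB d α {0} {0, EuclideanSpace.single (⟨0, hd⟩ : Fin d) (1 : ℝ)} := by
  set e := EuclideanSpace.single (⟨0, hd⟩ : Fin d) (1 : ℝ) with he
  have he0 : e ≠ 0 := ex_ne d hd
  refine ⟨?_, ?_, ?_, ?_⟩
  · intro x hx
    rw [Finset.mem_singleton] at hx
    subst hx
    exact Finset.mem_insert_self _ _
  · rw [Finset.card_insert_of_notMem (fun h => he0 (Finset.mem_singleton.mp h).symm),
      Finset.card_singleton]
  · intro w hw x hx y hy z hz hdist hpos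
    have hwx : w ≠ x := by rintro rfl; simp at hpos
    have hyz : y ≠ z := by
      rintro rfl
      rw [dist_self] at hdist
      rw [hdist] at hpos
      exact lt_irrefl 0 hpos
    simp only [Finset.mem_insert, Finset.mem_singleton] at hw hx hy hz
    rcases hw with rfl | rfl <;> rcases hx with rfl | rfl <;>
      rcases hy with rfl | rfl <;> rcases hz with rfl | rfl <;>
      first
        | rfl
        | exact absurd rfl hwx
        | exact absurd rfl hyz
        | exact Set.pair_comm _ _
  · rw [Finset.sum_singleton, ex_nnDist d hd, Real.one_rpow]

theorem stmt12 (d : ℕ) (hd : 0 < d) :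
    ∃ α₀ : ℝ, (d : ℝ) < α₀ ∧ ∀ α : ℝ, α₀ ≤ α →
      (sInf {v : ℝ≥0∞ | ∃ φ ψ : Finset (EuclideanSpace ℝ (Fin d)), memB d α φ ψ ∧
          v = volume (⋃ x ∈ φ, closedBall x (nnDist d ψ x))} =
        volume (closedBall (0 : EuclideanSpace ℝ (Fin d)) 1)) ∧
      memB d α {0} {0, EuclideanSpace.single (⟨0, hd⟩ : Fin d) (1 : ℝ)} ∧
      volume (⋃ x ∈ ({0} : Finset (EuclideanSpace ℝ (Fin d))),
          closedBall x (nnDist d ({0, EuclideanSpace.single (⟨0, hd⟩ : Fin d) (1 : ℝ)}) x)) =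
        volume (closedBall (0 : EuclideanSpace ℝ (Fin d)) 1) := by
  refine ⟨(d:ℝ) * 2^(d+1), ?_, fun α hα => ?_⟩
  · have h1 : (1:ℝ) < 2^(d+1) := one_lt_pow₀ (one_lt_two : (1:ℝ) < 2) (Nat.succ_ne_zero d)
    have hd' : (0:ℝ) < d := by exact_mod_cast hd
    nlinarith
  · have hunion : volume (⋃ x ∈ ({0} : Finset (EuclideanSpace ℝ (Fin d))),
        closedBall x (nnDist d ({0, EuclideanSpace.single (⟨0, hd⟩ : Fin d) (1 : ℝ)}) x)) =
        volume (closedBall (0 : EuclideanSpace ℝ (Fin d)) 1) := by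
      rw [Finset.set_biUnion_singleton, ex_nnDist d hd]
    refine ⟨le_antisymm ?_ ?_, ex_memB d hd α, hunion⟩
    · exact sInf_le ⟨{0}, {0, EuclideanSpace.single (⟨0, hd⟩ : Fin d) (1 : ℝ)},
        ex_memB d hd α, hunion.symm⟩
    · apply le_sInf
      rintro v ⟨φ, ψ, hm, rfl⟩
      exact lower_bound d hd α hα φ ψ hm
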